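/- arXiv:2604.26432 — 3 statements merged into one kernel-verified Lean document; each statement's English description precedes it below -/
import Mathlib

section
/- Fix an integer m ≥ 3 and reals c > 0, λ > 0. For every integer n ≥ 3, the coefficient of x¹ in the polynomial γ_n equals −((n−2)/m)·c²·λ^{n−3}. -/
open Polynomial

/-- The polynomials `θ_n` in one variable `x` (representing `‖α‖²`):
`θ_1 = 1`, `θ_n = 0` for even `n`, and
`θ_{2k+1} = (-1)^k ((1/2)_k / (m/2)_k) c^{2k} x^k` for `k ≥ 1`. -/
noncomputable def thetaPoly (m : ℕ) (c : ℝ) : ℕ → Polynomial ℝ := fun n =>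
  if n % 2 = 1 then
    C ((-1 : ℝ) ^ (n / 2) *
        ((ascPochhammer ℝ (n / 2)).eval ((1 : ℝ) / 2) /
          (ascPochhammer ℝ (n / 2)).eval ((m : ℝ) / 2)) * c ^ (2 * (n / 2))) *
      X ^ (n / 2)
  else 0

lemma coeff_mul_one' (p q : Polynomial ℝ) :
    (p * q).coeff 1 = p.coeff 0 * q.coeff 1 + p.coeff 1 * q.coeff 0 := by
  rw [coeff_mul]
  simp [Finset.Nat.antidiagonal_succ, Finset.sum_insert, Prod.map]

lemma theta_coeff0 (m : ℕ) (c : ℝ) (k : ℕ) :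
    (thetaPoly m c k).coeff 0 = if k = 1 then 1 else 0 := by
  unfold thetaPoly
  rcases Nat.lt_or_ge k 2 with h | h
  · interval_cases k <;> simp [ascPochhammer]
  · have hk1 : k ≠ 1 := by omega
    rw [if_neg hk1]
    split
    · have h2 : k / 2 ≠ 0 := by omega
      simp [coeff_C_mul, coeff_X_pow, h2, Ne.symm h2]
    · simp

lemma theta_coeff1 (m : ℕ) (hm : 3 ≤ m) (c : ℝ) (k : ℕ) :
    (thetaPoly m c k).coeff 1 = if k = 3 then -(c ^ 2 / (m : ℝ)) else 0 := by
  have hm0 : (m : ℝ) ≠ 0 := by positivity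
  unfold thetaPoly
  rcases Nat.lt_or_ge k 4 with h | h
  · interval_cases k
    · norm_num
    · norm_num [coeff_C_mul, coeff_X_pow, coeff_one]
    · norm_num
    · rw [if_pos (by norm_num : (3:ℕ) % 2 = 1), coeff_C_mul, coeff_X_pow,
        if_pos (by norm_num : (1:ℕ) = 3 / 2), if_pos rfl]
      norm_num [ascPochhammer_one]
      field_simp
  · have hk3 : k ≠ 3 := by omega
    rw [if_neg hk3]
    split
    · have h2 : (1 : ℕ) ≠ k / 2 := by omega
      rw [coeff_C_mul, coeff_X_pow, if_neg h2, mul_zero]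
    · simp

/-- For any dimension `m ≥ 3`, speed `c > 0` and intensity `λ > 0`, and `γ` defined by
`γ_1 = 1`, `γ_n = θ_n + λ Σ_{k=1}^{n-1} γ_{n-k} θ_k` for `n ≥ 2`, the coefficient of `x` in
`γ_n` is `-((n-2)/m) c² λ^{n-3}` for every `n ≥ 3`. -/
theorem coeff_x_one_gamma (m : ℕ) (hm : 3 ≤ m) (c lam : ℝ) (hc : 0 < c) (hlam : 0 < lam)
    (γ : ℕ → Polynomial ℝ) (hγ1 : γ 1 = 1)
    (hγ : ∀ n, 2 ≤ n → γ n = thetaPoly m c n +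
      C lam * ∑ k ∈ Finset.Icc 1 (n - 1), γ (n - k) * thetaPoly m c k) :
    ∀ n, 3 ≤ n →
      (γ n).coeff 1 = -(((n : ℝ) - 2) / (m : ℝ)) * c ^ 2 * lam ^ (n - 3) := by
  have hm0 : (m : ℝ) ≠ 0 := by positivity
  -- coefficient of x^0
  have hA : ∀ n, 1 ≤ n → (γ n).coeff 0 = lam ^ (n - 1) := by
    intro n hn
    induction n, hn using Nat.le_induction with
    | base => simp [hγ1]
    | succ n hn ih =>
      rw [hγ (n+1) (by omega), coeff_add, coeff_C_mul, finset_sum_coeff]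
      have hsum : ∑ k ∈ Finset.Icc 1 (n+1-1), ((γ (n+1-k)) * thetaPoly m c k).coeff 0
          = (γ n).coeff 0 := by
        rw [Finset.sum_eq_single 1]
        · simp [mul_coeff_zero, theta_coeff0]
        · intro k hk hk1
          rw [mul_coeff_zero, theta_coeff0, if_neg hk1, mul_zero]
        · intro h; exact absurd (by simp; omega : (1:ℕ) ∈ Finset.Icc 1 (n+1-1)) h
      rw [hsum, ih, theta_coeff0, if_neg (by omega), zero_add]
      rw [show n + 1 - 1 = (n - 1) + 1 from by omega, pow_succ]
      ring
  -- coefficient of x^1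
  have hB : ∀ n, 2 ≤ n →
      (γ n).coeff 1 = -(((n : ℝ) - 2) / (m : ℝ)) * c ^ 2 * lam ^ (n - 3) := by
    intro n hn
    induction n, hn using Nat.le_induction with
    | base =>
      rw [hγ 2 (by omega), coeff_add, coeff_C_mul, finset_sum_coeff]
      norm_num [coeff_mul_one', hγ1, theta_coeff0, theta_coeff1 m hm, coeff_one]
    | succ n hn ih =>
      rw [hγ (n+1) (by omega), coeff_add, coeff_C_mul, finset_sum_coeff]
      rcases eq_or_lt_of_le hn with h2 | h3
      · -- n = 2, so n+1 = 3
        subst h2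
        rw [show (2:ℕ)+1-1 = 2 from rfl, show Finset.Icc 1 2 = {1, 2} from rfl,
          Finset.sum_pair (by norm_num : (1:ℕ) ≠ 2)]
        norm_num [coeff_mul_one', hγ1, theta_coeff0, theta_coeff1 m hm, ih, coeff_one]
        ring
      · -- n ≥ 3
        have h3' : 3 ≤ n := h3
        have key : ∑ k ∈ Finset.Icc 1 (n+1-1), ((γ (n+1-k)) * thetaPoly m c k).coeff 1
            = (γ n).coeff 1 + lam ^ (n-3) * (-(c^2/(m:ℝ))) := by
          have hsub13 : ({1, 3} : Finset ℕ) ⊆ Finset.Icc 1 (n+1-1) := by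
            intro x hx
            fin_cases hx <;> simp <;> omega
          rw [← Finset.sum_subset hsub13 (by
            intro k hk hk2
            simp only [Finset.mem_insert, Finset.mem_singleton, not_or] at hk2
            rw [coeff_mul_one', theta_coeff0, theta_coeff1 m hm, if_neg hk2.1,
              if_neg hk2.2, mul_zero, mul_zero, add_zero])]
          rw [Finset.sum_pair (by norm_num : (1:ℕ) ≠ 3), coeff_mul_one', coeff_mul_one',
            theta_coeff0, theta_coeff1 m hm, theta_coeff0, theta_coeff1 m hm]
          rw [if_neg (by norm_num : ¬(1:ℕ) = 3), if_pos rfl, if_pos rfl,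
            if_neg (by norm_num : ¬(3:ℕ) = 1)]
          rw [show n + 1 - 1 = n from rfl, show n + 1 - 3 = n - 2 from by omega,
            hA (n-2) (by omega), show n - 2 - 1 = n - 3 from by omega]
          ring
        rw [key, ih, theta_coeff1 m hm, if_neg (by omega), zero_add]
        rw [show n + 1 - 3 = (n - 3) + 1 from by omega, pow_succ]
        push_cast
        field_simp
        ring
  intro n hn
  exact hB n (by omega)
end

section
/- Fix an integer m ≥ 3 and reals c > 0, λ > 0. For every integer n ≥ 1, the polynomial γ_n has degree at most ⌊(n−1)/2⌋ in the variable x. -/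
open Polynomial

lemma natDegree_thetaPoly_le (m : ℕ) (c : ℝ) (k : ℕ) :
    (thetaPoly m c k).natDegree ≤ (k - 1) / 2 := by
  unfold thetaPoly
  split_ifs with h
  · calc (C _ * X ^ (k / 2)).natDegree ≤ (X ^ (k / 2) : Polynomial ℝ).natDegree :=
        natDegree_C_mul_le _ _
      _ = k / 2 := natDegree_X_pow _
      _ ≤ (k - 1) / 2 := by omega
  · simp

/-- For every `n ≥ 1`, the polynomial `γ_n` has degree at most `⌊(n-1)/2⌋` in `x`. -/
theorem natDegree_gamma_le (m : ℕ) (hm : 3 ≤ m) (c lam : ℝ) (hc : 0 < c) (hlam : 0 < lam)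
    (γ : ℕ → Polynomial ℝ) (hγ1 : γ 1 = 1)
    (hγ : ∀ n, 2 ≤ n → γ n = thetaPoly m c n +
      C lam * ∑ k ∈ Finset.Icc 1 (n - 1), γ (n - k) * thetaPoly m c k) :
    ∀ n, 1 ≤ n → (γ n).natDegree ≤ (n - 1) / 2 := by
  intro n
  induction n using Nat.strong_induction_on with
  | _ n ih =>
    intro hn
    rcases eq_or_lt_of_le hn with h1 | h2
    · rw [← h1, hγ1]; simp
    · rw [hγ n h2]
      refine le_trans (natDegree_add_le _ _) (max_le (natDegree_thetaPoly_le m c n |>.trans (by omega)) ?_)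
      refine le_trans (natDegree_C_mul_le _ _) ?_
      refine Polynomial.natDegree_sum_le_of_forall_le _ _ ?_
      intro k hk
      simp only [Finset.mem_Icc] at hk
      refine le_trans (natDegree_mul_le) ?_
      have h1 : (γ (n - k)).natDegree ≤ (n - k - 1) / 2 := ih (n - k) (by omega) (by omega)
      have h2 : (thetaPoly m c k).natDegree ≤ (k - 1) / 2 := natDegree_thetaPoly_le m c k
      omega
end

section
/- Let m ≥ 3 be an integer. For every real number x, the series Σ_{k=4}^{∞} (x^k / k!) · [ (m/2)·(k−3)(k+2) + (k−3)(k−4) ] converges, and e^{−x} times its sum equals m·[ e^{−x}(x² + 3x + 3) + x²/2 − 3 ] + (x² + 12)(1 − e^{−x}) − 6x(1 + e^{−x}). -/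
private lemma real_hasSum_exp (x : ℝ) :
    HasSum (fun n : ℕ => x ^ n / (Nat.factorial n)) (Real.exp x) := by
  have h := (NormedSpace.expSeries_div_summable x).hasSum
  have : Real.exp x = ∑' n : ℕ, x ^ n / (Nat.factorial n) := by
    rw [Real.exp_eq_exp_ℝ, NormedSpace.exp_eq_tsum_div]
  rw [this]
  exact h

/-- Let `m ≥ 3`. For every real `x`, the series
`Σ_{k=4}^∞ (x^k / k!) [ (m/2)(k-3)(k+2) + (k-3)(k-4) ]` converges, and `e^{-x}` times its sum
equals `m [ e^{-x}(x² + 3x + 3) + x²/2 - 3 ] + (x² + 12)(1 - e^{-x}) - 6x(1 + e^{-x})`.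
(The series is indexed by `k = j + 4`, `j ∈ ℕ`.) -/
theorem series_sum_combined (m : ℕ) (hm : 3 ≤ m) (x : ℝ) :
    ∃ S : ℝ,
      HasSum (fun j : ℕ => x ^ (j + 4) / (Nat.factorial (j + 4)) *
          ((m : ℝ) / 2 * ((j : ℝ) + 1) * ((j : ℝ) + 6) + ((j : ℝ) + 1) * (j : ℝ))) S ∧
      Real.exp (-x) * S =
        (m : ℝ) * (Real.exp (-x) * (x ^ 2 + 3 * x + 3) + x ^ 2 / 2 - 3) +
          (x ^ 2 + 12) * (1 - Real.exp (-x)) - 6 * x * (1 + Real.exp (-x)) := by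
  have h := real_hasSum_exp x
  have h2 : HasSum (fun j : ℕ => x ^ (j + 2) / (Nat.factorial (j + 2)))
      (Real.exp x - (1 + x)) := by
    have := (hasSum_nat_add_iff' (f := fun n : ℕ => x ^ n / (Nat.factorial n)) 2).2 h
    simpa [Finset.sum_range_succ, Nat.factorial] using this
  have h3 : HasSum (fun j : ℕ => x ^ (j + 3) / (Nat.factorial (j + 3)))
      (Real.exp x - (1 + x + x ^ 2 / 2)) := by
    have := (hasSum_nat_add_iff' (f := fun n : ℕ => x ^ n / (Nat.factorial n)) 3).2 h
    simpa [Finset.sum_range_succ, Nat.factorial, pow_succ] using this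
  have h4 : HasSum (fun j : ℕ => x ^ (j + 4) / (Nat.factorial (j + 4)))
      (Real.exp x - (1 + x + x ^ 2 / 2 + x ^ 3 / 6)) := by
    have := (hasSum_nat_add_iff' (f := fun n : ℕ => x ^ n / (Nat.factorial n)) 4).2 h
    have e : (1 : ℝ) + x + x ^ 2 / 2 + x ^ 3 / 6 =
        ∑ i ∈ Finset.range 4, x ^ i / (Nat.factorial i) := by
      simp [Finset.sum_range_succ, Nat.factorial]
    rw [e]
    exact this
  set M : ℝ := (m : ℝ)
  have hc : HasSum (fun j : ℕ =>
      (M / 2 + 1) * x ^ 2 * (x ^ (j + 2) / (Nat.factorial (j + 2)))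
        + (-6 * x) * (x ^ (j + 3) / (Nat.factorial (j + 3)))
        + (12 - 3 * M) * (x ^ (j + 4) / (Nat.factorial (j + 4))))
      ((M / 2 + 1) * x ^ 2 * (Real.exp x - (1 + x))
        + (-6 * x) * (Real.exp x - (1 + x + x ^ 2 / 2))
        + (12 - 3 * M) * (Real.exp x - (1 + x + x ^ 2 / 2 + x ^ 3 / 6))) :=
    ((h2.mul_left _).add (h3.mul_left _)).add (h4.mul_left _)
  refine ⟨(M / 2 + 1) * x ^ 2 * (Real.exp x - (1 + x))
        + (-6 * x) * (Real.exp x - (1 + x + x ^ 2 / 2))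
        + (12 - 3 * M) * (Real.exp x - (1 + x + x ^ 2 / 2 + x ^ 3 / 6)), ?_, ?_⟩
  · refine hc.congr_fun fun j => ?_
    have f2 : (Nat.factorial (j + 4) : ℝ) =
        ((j : ℝ) + 4) * ((j : ℝ) + 3) * (Nat.factorial (j + 2)) := by
      rw [show j + 4 = (j + 3) + 1 from rfl, Nat.factorial_succ,
        show j + 3 = (j + 2) + 1 from rfl, Nat.factorial_succ]
      push_cast; ring
    have f3 : (Nat.factorial (j + 3) : ℝ) = ((j : ℝ) + 3) * (Nat.factorial (j + 2)) := by
      rw [show j + 3 = (j + 2) + 1 from rfl, Nat.factorial_succ]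
      push_cast; ring
    have hne : (Nat.factorial (j + 2) : ℝ) ≠ 0 := by
      exact_mod_cast (Nat.factorial_pos (j + 2)).ne'
    have hj3 : ((j : ℝ) + 3) ≠ 0 := by positivity
    have hj4 : ((j : ℝ) + 4) ≠ 0 := by positivity
    rw [f2, f3]
    field_simp
    ring
  · have hx : Real.exp (-x) * Real.exp x = 1 := by
      rw [← Real.exp_add]; simp
    set E := Real.exp (-x)
    set F := Real.exp x
    linear_combination ((M / 2 + 1) * x ^ 2 - 6 * x + (12 - 3 * M)) * hx
end
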